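/- The function x ↦ (1/x − 1)/ln x is strictly increasing on (0, 1). -/

import Mathlib

/-- `x ↦ (1/x − 1)/ln x` is strictly increasing on `(0, 1)`. -/
theorem psi_strictMonoOn :
    StrictMonoOn (fun x : ℝ => (1 / x - 1) / Real.log x) (Set.Ioo (0 : ℝ) 1) := by
  have hderiv : ∀ x ∈ Set.Ioo (0:ℝ) 1, HasDerivAt (fun x : ℝ => (1 / x - 1) / Real.log x)
      ((x - 1 - Real.log x) / (x^2 * (Real.log x)^2)) x := by
    intro x hx
    have hx0 : x ≠ 0 := ne_of_gt hx.1
    have hl : Real.log x ≠ 0 := ne_of_lt (Real.log_neg hx.1 hx.2)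
    have h1 : HasDerivAt (fun x : ℝ => 1 / x - 1) (-(1/x^2)) x := by
      have := (hasDerivAt_inv hx0).sub_const 1
      simpa [one_div] using this
    have h2 : HasDerivAt Real.log x⁻¹ x := Real.hasDerivAt_log hx0
    have : HasDerivAt (fun x : ℝ => (1 / x - 1) / Real.log x) _ x := h1.div h2 hl
    convert this using 1
    field_simp
    ring
  have hdpos : ∀ x ∈ Set.Ioo (0:ℝ) 1, 0 < (x - 1 - Real.log x) / (x^2 * (Real.log x)^2) := by
    intro x hx
    have hlog : Real.log x < x - 1 := Real.log_lt_sub_one_of_pos hx.1 (ne_of_lt hx.2)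
    have hl : Real.log x ≠ 0 := ne_of_lt (Real.log_neg hx.1 hx.2)
    have hx0 : x ≠ 0 := ne_of_gt hx.1
    apply div_pos (by linarith)
    positivity
  apply strictMonoOn_of_deriv_pos (convex_Ioo 0 1)
  · intro x hx
    exact ((hderiv x hx).differentiableAt).continuousAt.continuousWithinAt
  · intro x hx
    rw [interior_Ioo] at hx
    rw [(hderiv x hx).deriv]
    exact hdpos x hx
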